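/- Let M = M₁ ⊕₃ M₂ be the 3-sum of binary matroids M₁ and M₂ with Z = E(M₁) ∩ E(M₂) a 3-element circuit of both. If C is a cycle of M, then there are cycles C₁ of M₁ and C₂ of M₂ such that C = C₁ △ C₂ and |C₁ ∩ C₂| ≤ 1. -/

import Mathlib

open Set

variable {α : Type*}

/-- A circuit of a matroid: an inclusion-minimal dependent set. -/
def MCircuit (M : Matroid α) (C : Set α) : Prop :=
  M.Dep C ∧ ∀ C' ⊂ C, M.Indep C'

/-- A binary matroid: one representable over GF(2). -/
def IsBinary (M : Matroid α) : Prop :=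
  ∃ (n : ℕ) (φ : α → (Fin n → ZMod 2)),
    ∀ I ⊆ M.E, (M.Indep I ↔ LinearIndependent (ZMod 2) (fun x : I => φ x))

/-- A cycle of a matroid: a (possibly empty) disjoint union of circuits. -/
def MCycle (M : Matroid α) (C : Set α) : Prop :=
  ∃ 𝒞 : Set (Set α), (∀ D ∈ 𝒞, MCircuit M D) ∧ 𝒞.Pairwise Disjoint ∧ C = ⋃₀ 𝒞

/-- Deletion of a set of elements from a matroid. -/
def MDelete (M : Matroid α) (D : Set α) : Matroid α := M.restrict (M.E \ D)

/-- The rank of a matroid: the supremum of sizes of independent sets. -/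
noncomputable def mRank (M : Matroid α) : ℕ := sSup (Set.ncard '' {I | M.Indep I})

section Aux

variable {M : Matroid α} {n : ℕ} {φ : α → Fin n → ZMod 2}

lemma mcycle_subset_ground {C : Set α} (h : MCycle M C) : C ⊆ M.E := by
  obtain ⟨𝒞, h𝒞, -, rfl⟩ := h
  exact sUnion_subset fun D hD => (h𝒞 D hD).1.subset_ground

lemma zmod2_ne_zero : ∀ a : ZMod 2, a ≠ 0 → a = 1 := by decide

lemma dep_finset_subset
    (hφ : ∀ I ⊆ M.E, (M.Indep I ↔ LinearIndependent (ZMod 2) (fun x : I => φ x)))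
    {D : Set α} (hD : M.Dep D) :
    ∃ S : Finset α, ↑S ⊆ D ∧ S.Nonempty ∧ M.Dep ↑S ∧ ∑ e ∈ S, φ e = 0 := by
  have hDE : D ⊆ M.E := hD.subset_ground
  have hdep : ¬ LinearIndependent (ZMod 2) (φ ∘ ((↑) : D → α)) := fun h =>
    hD.not_indep ((hφ D hDE).mpr h)
  obtain ⟨f, hfsupp, hfsum, hfne⟩ := linearDepOn_iff.mp hdep
  have hcoef : ∀ i ∈ f.support, f i • φ i = φ i := by
    intro i hi
    rw [zmod2_ne_zero _ (Finsupp.mem_support_iff.mp hi), one_smul]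
  have hsum : ∑ e ∈ f.support, φ e = 0 := by
    rw [← Finset.sum_congr rfl hcoef]; exact hfsum
  refine ⟨f.support, hfsupp, Finsupp.support_nonempty_iff.mpr hfne, ⟨?_, hfsupp.trans hDE⟩, hsum⟩
  intro hind
  have hind' : LinearIndependent (ZMod 2) (φ ∘ ((↑) : (↑f.support : Set α) → α)) :=
    (hφ _ (hfsupp.trans hDE)).mp hind
  exact linearDepOn_iff.mpr
    ⟨f, fun x hx => by exact_mod_cast hx, hfsum, hfne⟩ hind'

lemma circuit_finset
    (hφ : ∀ I ⊆ M.E, (M.Indep I ↔ LinearIndependent (ZMod 2) (fun x : I => φ x)))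
    {C : Set α} (hC : MCircuit M C) :
    ∃ S : Finset α, ↑S = C ∧ ∑ e ∈ S, φ e = 0 := by
  obtain ⟨S, hSsub, -, hSdep, hsum⟩ := dep_finset_subset hφ hC.1
  refine ⟨S, ?_, hsum⟩
  by_contra h
  exact hSdep.not_indep (hC.2 _ (hSsub.ssubset_of_ne h))

lemma circuit_nonempty {C : Set α} (hC : MCircuit M C) : C.Nonempty := by
  rw [Set.nonempty_iff_ne_empty]
  rintro rfl
  exact hC.1.not_indep M.empty_indep

lemma dep_finset_circuit
    (hφ : ∀ I ⊆ M.E, (M.Indep I ↔ LinearIndependent (ZMod 2) (fun x : I => φ x))) :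
    ∀ F : Finset α, M.Dep ↑F →
      ∃ G : Finset α, G ⊆ F ∧ MCircuit M ↑G ∧ ∑ e ∈ G, φ e = 0 := by
  classical
  intro F
  induction F using Finset.strongInduction with
  | _ F ih =>
    intro hF
    by_cases hc : ∀ C' ⊂ (↑F : Set α), M.Indep C'
    · obtain ⟨S, hS, hsum⟩ := circuit_finset hφ ⟨hF, hc⟩
      have hSF : S = F := Finset.coe_injective hS
      subst hSF
      exact ⟨S, Finset.Subset.refl S, ⟨hF, hc⟩, hsum⟩
    · push_neg at hc
      obtain ⟨C', hC'sub, hC'dep⟩ := hc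
      have hC'fin : C'.Finite := F.finite_toSet.subset hC'sub.subset
      have hdepC' : M.Dep C' := ⟨hC'dep, hC'sub.subset.trans hF.subset_ground⟩
      have hGF : hC'fin.toFinset ⊂ F := by
        rw [← Finset.coe_ssubset, hC'fin.coe_toFinset]; exact hC'sub
      obtain ⟨G, hG1, hG2, hG3⟩ := ih hC'fin.toFinset hGF
        (by rwa [hC'fin.coe_toFinset])
      exact ⟨G, hG1.trans hGF.subset, hG2, hG3⟩

lemma zero_sum_cycle
    (hφ : ∀ I ⊆ M.E, (M.Indep I ↔ LinearIndependent (ZMod 2) (fun x : I => φ x))) :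
    ∀ F : Finset α, ↑F ⊆ M.E → ∑ e ∈ F, φ e = 0 → MCycle M ↑F := by
  classical
  intro F
  induction F using Finset.strongInduction with
  | _ F ih =>
    intro hFE hsum
    rcases F.eq_empty_or_nonempty with rfl | hne
    · exact ⟨∅, by simp, by simp, by simp⟩
    · have hdep : M.Dep ↑F := by
        refine ⟨fun hind => ?_, hFE⟩
        have hind' : LinearIndependent (ZMod 2) (fun x : (↑F : Set α) => φ x) :=
          (hφ _ hFE).mp hind
        have h1 := Fintype.linearIndependent_iff.mp hind' (fun _ => 1) ?_
        · obtain ⟨e, he⟩ := hne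
          exact one_ne_zero (h1 ⟨e, he⟩)
        · simp only [one_smul]
          rw [Finset.sum_finset_coe (fun e => φ e) F]
          exact hsum
      obtain ⟨G, hGF, hGcirc, hGsum⟩ := dep_finset_circuit hφ F hdep
      have hGne : G.Nonempty := by
        obtain ⟨x, hx⟩ := circuit_nonempty hGcirc
        exact ⟨x, hx⟩
      have hss : F \ G ⊂ F := Finset.sdiff_ssubset hGF hGne
      have hsum' : ∑ e ∈ F \ G, φ e = 0 := by
        have := Finset.sum_sdiff (f := φ) hGF
        rw [hsum] at this
        rwa [hGsum, add_zero] at this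
      obtain ⟨𝒞, h𝒞, hpd, heq⟩ := ih (F \ G) hss
        ((Finset.coe_subset.mpr hss.subset).trans hFE) hsum'
      refine ⟨insert (↑G) 𝒞, ?_, ?_, ?_⟩
      · rintro D (rfl | hD)
        · exact hGcirc
        · exact h𝒞 D hD
      · rw [Set.pairwise_insert]
        refine ⟨hpd, fun D hD _ => ?_⟩
        have hDsub : D ⊆ ↑(F \ G) := heq ▸ Set.subset_sUnion_of_mem hD
        have : Disjoint (↑(F \ G) : Set α) ↑G := by
          rw [Finset.disjoint_coe]; exact Finset.sdiff_disjoint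
        exact ⟨(this.mono_left hDsub).symm, this.mono_left hDsub⟩
      · rw [Set.sUnion_insert, ← heq, ← Finset.coe_union,
          Finset.union_sdiff_of_subset hGF]

lemma cycle_finset_sum
    (hφ : ∀ I ⊆ M.E, (M.Indep I ↔ LinearIndependent (ZMod 2) (fun x : I => φ x))) :
    ∀ F : Finset α, MCycle M ↑F → ∑ e ∈ F, φ e = 0 := by
  classical
  intro F
  induction F using Finset.strongInduction with
  | _ F ih =>
    intro hF
    rcases F.eq_empty_or_nonempty with rfl | hne
    · simp
    · obtain ⟨𝒞, h𝒞, hpd, heq⟩ := hF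
      obtain ⟨x, hx⟩ := hne
      have hx' : (x : α) ∈ ⋃₀ 𝒞 := heq ▸ hx
      obtain ⟨D, hD, hxD⟩ := hx'
      obtain ⟨G, hGD, hGsum⟩ := circuit_finset hφ (h𝒞 D hD)
      have hGF : G ⊆ F := by
        rw [← Finset.coe_subset, hGD]
        exact heq ▸ Set.subset_sUnion_of_mem hD
      have hGne : G.Nonempty := by
        obtain ⟨y, hy⟩ := circuit_nonempty (h𝒞 D hD)
        rw [← hGD] at hy; exact ⟨y, hy⟩
      have hss : F \ G ⊂ F := Finset.sdiff_ssubset hGF hGne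
      have hrest : (↑(F \ G) : Set α) = ⋃₀ (𝒞 \ {D}) := by
        ext y
        simp only [Finset.coe_sdiff, Set.mem_diff, Finset.mem_coe, hGD]
        have hyF : y ∈ F ↔ y ∈ ⋃₀ 𝒞 := by rw [← Finset.mem_coe, heq]
        rw [hyF]
        constructor
        · rintro ⟨⟨D', hD', hyD'⟩, hyD⟩
          exact ⟨D', ⟨hD', fun h => hyD (h ▸ hyD')⟩, hyD'⟩
        · rintro ⟨D', ⟨hD', hDne⟩, hyD'⟩
          refine ⟨⟨D', hD', hyD'⟩, fun hyD => ?_⟩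
          exact Set.disjoint_left.mp (hpd hD' hD (by simpa using hDne)) hyD' hyD
      have hsum' : ∑ e ∈ F \ G, φ e = 0 := by
        refine ih (F \ G) hss ⟨𝒞 \ {D}, fun D' hD' => h𝒞 D' hD'.1, hpd.mono diff_subset, hrest⟩
      have := Finset.sum_sdiff (f := φ) hGF
      rw [hsum', hGsum, zero_add] at this
      exact this.symm

lemma finset_sum_symmDiff (S T : Finset α) [DecidableEq α] :
    ∑ e ∈ symmDiff S T, φ e = ∑ e ∈ S, φ e + ∑ e ∈ T, φ e := by
  have h1 : ∑ e ∈ S ∪ T, φ e + ∑ e ∈ S ∩ T, φ e = ∑ e ∈ S, φ e + ∑ e ∈ T, φ e :=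
    Finset.sum_union_inter
  have h2 : ∑ e ∈ S ∪ T, φ e = ∑ e ∈ symmDiff S T, φ e + ∑ e ∈ S ∩ T, φ e := by
    rw [← Finset.sum_union (by rw [← Finset.inf_eq_inter]; exact disjoint_symmDiff_inf S T)]
    congr 1
    rw [← Finset.sup_eq_union, ← Finset.inf_eq_inter]
    exact (symmDiff_sup_inf S T).symm
  have hvv : ∀ v : Fin n → ZMod 2, v + v = 0 := fun v =>
    funext fun i => CharTwo.add_self_eq_zero (v i)
  calc ∑ e ∈ symmDiff S T, φ e
      = ∑ e ∈ symmDiff S T, φ e + (∑ e ∈ S ∩ T, φ e + ∑ e ∈ S ∩ T, φ e) := by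
        rw [hvv, add_zero]
    _ = (∑ e ∈ symmDiff S T, φ e + ∑ e ∈ S ∩ T, φ e) + ∑ e ∈ S ∩ T, φ e := by
        rw [add_assoc]
    _ = ∑ e ∈ S ∪ T, φ e + ∑ e ∈ S ∩ T, φ e := by rw [← h2]
    _ = ∑ e ∈ S, φ e + ∑ e ∈ T, φ e := h1

lemma cycle_symmDiff
    (hφ : ∀ I ⊆ M.E, (M.Indep I ↔ LinearIndependent (ZMod 2) (fun x : I => φ x)))
    {A B : Set α} (hA : MCycle M A) (hB : MCycle M B) (hBfin : B.Finite) :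
    MCycle M (symmDiff A B) := by
  classical
  obtain ⟨𝒞, h𝒞, hpd, rfl⟩ := hA
  set 𝒞₁ : Set (Set α) := {D ∈ 𝒞 | (D ∩ B).Nonempty} with h𝒞₁def
  set 𝒞₀ : Set (Set α) := {D ∈ 𝒞 | ¬(D ∩ B).Nonempty} with h𝒞₀def
  have h01 : 𝒞₀ ∪ 𝒞₁ = 𝒞 := by
    ext D; by_cases h : (D ∩ B).Nonempty <;> simp [h𝒞₀def, h𝒞₁def, h]
  have hcirc_fin : ∀ D ∈ 𝒞, D.Finite := by
    intro D hD
    obtain ⟨G, hG, -⟩ := circuit_finset hφ (h𝒞 D hD)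
    rw [← hG]; exact G.finite_toSet
  have h𝒞₁fin : 𝒞₁.Finite := by
    refine Set.Finite.of_finite_image (f := fun D => D ∩ B)
      (hBfin.finite_subsets.subset ?_) ?_
    · rintro _ ⟨D, hD, rfl⟩; exact Set.inter_subset_right
    · intro D hD D' hD' hEq
      by_contra hne
      obtain ⟨x, hx1, hx2⟩ := hD.2
      have hEq' : D ∩ B = D' ∩ B := hEq
      have hx' : x ∈ D' ∩ B := hEq' ▸ (⟨hx1, hx2⟩ : x ∈ D ∩ B)
      exact Set.disjoint_left.mp (hpd hD.1 hD'.1 hne) hx1 hx'.1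
  set U₀ := ⋃₀ 𝒞₀ with hU₀def
  set U₁ := ⋃₀ 𝒞₁ with hU₁def
  have hU₁fin : U₁.Finite := Set.Finite.sUnion h𝒞₁fin (fun D hD => hcirc_fin D hD.1)
  have hU0B : Disjoint U₀ B := by
    rw [Set.disjoint_left]
    rintro x ⟨D, hD, hx⟩ hxB
    exact hD.2 ⟨x, hx, hxB⟩
  have hU0U1 : Disjoint U₀ U₁ := by
    rw [Set.disjoint_left]
    rintro x ⟨D, hD, hx⟩ ⟨D', hD', hx'⟩
    rcases eq_or_ne D D' with rfl | hne
    · exact hD.2 hD'.2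
    · exact Set.disjoint_left.mp (hpd hD.1 hD'.1 hne) hx hx'
  have hA_eq : ⋃₀ 𝒞 = U₀ ∪ U₁ := by rw [← h01, Set.sUnion_union]
  have hU₁cyc : MCycle M U₁ :=
    ⟨𝒞₁, fun D hD => h𝒞 D hD.1, hpd.mono (fun D hD => hD.1), rfl⟩
  have hU₁E : U₁ ⊆ M.E := mcycle_subset_ground hU₁cyc
  have hBE : B ⊆ M.E := mcycle_subset_ground hB
  have hDfin : (symmDiff U₁ B).Finite := (hU₁fin.union hBfin).subset symmDiff_subset_union
  have hsum1 : ∑ e ∈ hU₁fin.toFinset, φ e = 0 :=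
    cycle_finset_sum hφ hU₁fin.toFinset (by rw [hU₁fin.coe_toFinset]; exact hU₁cyc)
  have hsumB : ∑ e ∈ hBfin.toFinset, φ e = 0 :=
    cycle_finset_sum hφ hBfin.toFinset (by rw [hBfin.coe_toFinset]; exact hB)
  have htfeq : hDfin.toFinset = symmDiff hU₁fin.toFinset hBfin.toFinset := by
    ext e
    simp [Finset.mem_symmDiff, Set.mem_symmDiff]
  have hDsum : ∑ e ∈ hDfin.toFinset, φ e = 0 := by
    rw [htfeq, finset_sum_symmDiff, hsum1, hsumB, add_zero]
  have hDcyc : MCycle M (symmDiff U₁ B) := by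
    have := zero_sum_cycle hφ hDfin.toFinset
      (by rw [hDfin.coe_toFinset]
          exact symmDiff_subset_union.trans (Set.union_subset hU₁E hBE)) hDsum
    rwa [hDfin.coe_toFinset] at this
  obtain ⟨𝒟, h𝒟, h𝒟pd, h𝒟eq⟩ := hDcyc
  refine ⟨𝒞₀ ∪ 𝒟, ?_, ?_, ?_⟩
  · rintro D (hD | hD)
    · exact h𝒞 D hD.1
    · exact h𝒟 D hD
  · have hcross : ∀ X ∈ 𝒞₀, ∀ Y ∈ 𝒟, Disjoint X Y := by
      intro X hX Y hY
      have hYsub : Y ⊆ symmDiff U₁ B := h𝒟eq ▸ Set.subset_sUnion_of_mem hY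
      have hXsub : X ⊆ U₀ := Set.subset_sUnion_of_mem hX
      have : Disjoint U₀ (symmDiff U₁ B) :=
        Disjoint.mono_right symmDiff_subset_union (Set.disjoint_union_right.mpr ⟨hU0U1, hU0B⟩)
      exact this.mono hXsub hYsub
    rintro X (hX | hX) Y (hY | hY) hne
    · exact hpd hX.1 hY.1 hne
    · exact hcross X hX Y hY
    · exact (hcross Y hY X hX).symm
    · exact h𝒟pd hX hY hne
  · rw [Set.sUnion_union, ← h𝒟eq, hA_eq]
    have hd1 : ∀ x, x ∈ U₀ → x ∉ B := fun x hx hxB => Set.disjoint_left.mp hU0B hx hxB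
    have hd2 : ∀ x, x ∈ U₀ → x ∉ U₁ := fun x hx hx1 => Set.disjoint_left.mp hU0U1 hx hx1
    ext x
    have := hd1 x; have := hd2 x
    simp only [Set.mem_symmDiff, Set.mem_union]
    tauto

end Aux

theorem threeSum_cycle_decomp (M M₁ M₂ : Matroid α)
    (hM₁ : IsBinary M₁) (hM₂ : IsBinary M₂)
    (hZcard : (M₁.E ∩ M₂.E).ncard = 3)
    (hZ1 : MCircuit M₁ (M₁.E ∩ M₂.E)) (hZ2 : MCircuit M₂ (M₁.E ∩ M₂.E))
    (hE : M.E = symmDiff M₁.E M₂.E)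
    (hsum : ∀ C, MCycle M C ↔
      ∃ C₁ C₂, MCycle M₁ C₁ ∧ MCycle M₂ C₂ ∧ C = symmDiff C₁ C₂)
    (C : Set α) (hC : MCycle M C) :
    ∃ C₁ C₂, MCycle M₁ C₁ ∧ MCycle M₂ C₂ ∧ C = symmDiff C₁ C₂ ∧
      (C₁ ∩ C₂).Subsingleton := by
  obtain ⟨C₁, C₂, h1, h2, hCeq⟩ := (hsum C).mp hC
  set Z := M₁.E ∩ M₂.E with hZdef
  have hZfin : Z.Finite := by
    by_contra h
    rw [Set.Infinite.ncard h] at hZcard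
    exact absurd hZcard (by norm_num)
  have hsub1 : C₁ ⊆ M₁.E := mcycle_subset_ground h1
  have hsub2 : C₂ ⊆ M₂.E := mcycle_subset_ground h2
  have hinter : C₁ ∩ C₂ ⊆ Z := fun x hx => ⟨hsub1 hx.1, hsub2 hx.2⟩
  by_cases hcase : (C₁ ∩ C₂).ncard ≤ 1
  · refine ⟨C₁, C₂, h1, h2, hCeq, ?_⟩
    have := (Set.ncard_le_one (hZfin.subset hinter)).mp hcase
    exact fun a ha b hb => this a ha b hb
  · obtain ⟨n₁, φ₁, hφ₁⟩ := hM₁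
    obtain ⟨n₂, φ₂, hφ₂⟩ := hM₂
    have hZcyc1 : MCycle M₁ Z := ⟨{Z}, by simpa using hZ1, Set.pairwise_singleton _ _, by simp⟩
    have hZcyc2 : MCycle M₂ Z := ⟨{Z}, by simpa using hZ2, Set.pairwise_singleton _ _, by simp⟩
    have hc1' : MCycle M₁ (symmDiff C₁ Z) := cycle_symmDiff hφ₁ h1 hZcyc1 hZfin
    have hc2' : MCycle M₂ (symmDiff C₂ Z) := cycle_symmDiff hφ₂ h2 hZcyc2 hZfin
    refine ⟨symmDiff C₁ Z, symmDiff C₂ Z, hc1', hc2', ?_, ?_⟩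
    · rw [hCeq]
      ext x
      simp only [Set.mem_symmDiff]
      tauto
    · have hieq : symmDiff C₁ Z ∩ symmDiff C₂ Z = Z \ (C₁ ∪ C₂) := by
        ext x
        have hxZ : x ∈ C₁ → x ∈ C₂ → x ∈ Z := fun h1 h2 => hinter ⟨h1, h2⟩
        simp only [Set.mem_inter_iff, Set.mem_symmDiff, Set.mem_diff, Set.mem_union]
        tauto
      rw [hieq]
      have hdisj : Disjoint (C₁ ∩ C₂) (Z \ (C₁ ∪ C₂)) := by
        rw [Set.disjoint_left]
        rintro x hx ⟨-, hx2⟩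
        exact hx2 (Or.inl hx.1)
      have hsubZ : (C₁ ∩ C₂) ∪ (Z \ (C₁ ∪ C₂)) ⊆ Z :=
        Set.union_subset hinter diff_subset
      have hle : (C₁ ∩ C₂).ncard + (Z \ (C₁ ∪ C₂)).ncard ≤ 3 := by
        rw [← Set.ncard_union_eq hdisj (hZfin.subset hinter) (hZfin.subset diff_subset),
          ← hZcard]
        exact Set.ncard_le_ncard hsubZ hZfin
      push_neg at hcase
      have : (Z \ (C₁ ∪ C₂)).ncard ≤ 1 := by omega
      have := (Set.ncard_le_one (hZfin.subset diff_subset)).mp this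
      exact fun a ha b hb => this a ha b hb
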